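/- arXiv:1310.2736 — 3 statements merged into one kernel-verified Lean document; each statement's English description precedes it below -/
import Mathlib

section
/- The set of tensors with TT ranks at most (r₁,...,r_{d-1}) is closed in the finite-dimensional tensor space: if a sequence U^(n) of tensors, each with rank(A^i(U^(n))) ≤ r_i for all i, converges to U, then rank(A^i(U)) ≤ r_i for all i. -/
open Filter Topology Matrix

/-- The `i`-th matricization `A^i` of a tensor `U`, grouping the indices `(x₁,…,x_i)` into
the row index and `(x_{i+1},…,x_d)` into the column index. -/
def matricize {d : ℕ} {n : Fin d → ℕ} {K : Type*} [Field K]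
    (U : ((j : Fin d) → Fin (n j)) → K) (i : ℕ) :
    Matrix ((j : {j : Fin d // j.val < i}) → Fin (n j.1))
           ((j : {j : Fin d // ¬ j.val < i}) → Fin (n j.1)) K :=
  fun y z => U (fun j => if h : j.val < i then y ⟨j, h⟩ else z ⟨j, h⟩)

/-- If a family of `k` columns of `M` is linearly independent, then `k ≤ rank M`. -/
lemma rank_ge_of_cols_li {m p : Type*} [Fintype m] [Fintype p] {k : ℕ}
    (M : Matrix m p ℝ) (g : Fin k → p) (h : LinearIndependent ℝ (fun j => Mᵀ (g j))) :
    k ≤ M.rank := by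
  rw [Matrix.rank_eq_finrank_span_cols]
  set W := Submodule.span ℝ (Set.range Mᵀ) with hW
  have hmem : ∀ j, Mᵀ (g j) ∈ W := fun j => Submodule.subset_span ⟨g j, rfl⟩
  let w : Fin k → W := fun j => ⟨Mᵀ (g j), hmem j⟩
  have hw : LinearIndependent ℝ w := by
    apply LinearIndependent.of_comp W.subtype
    exact h
  have hk : k ≤ Module.finrank ℝ W := by simpa using hw.fintype_card_le_finrank
  exact hk

/-- Rank is lower semicontinuous: a limit of matrices of rank at most `r` has rank at most
`r`. -/
lemma rank_le_of_tendsto {m p : Type*} [Fintype m] [Fintype p]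
    (Aseq : ℕ → Matrix m p ℝ) (A : Matrix m p ℝ) (r : ℕ)
    (h : ∀ s, (Aseq s).rank ≤ r) (hconv : Tendsto Aseq atTop (𝓝 A)) : A.rank ≤ r := by
  by_contra hr
  push_neg at hr
  -- extract r+1 linearly independent columns of A
  rw [Matrix.rank_eq_finrank_span_cols] at hr
  obtain ⟨t, hts, htspan, htli⟩ := exists_linearIndependent ℝ (Set.range Aᵀ)
  have htfin : t.Finite := (Set.finite_range Aᵀ).subset hts
  haveI : Fintype t := htfin.fintype
  have hcard : r + 1 ≤ Fintype.card t := by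
    have := finrank_span_set_eq_card (s := t) htli
    rw [htspan] at this
    rw [Set.toFinset_card] at this
    have hr' : r < Module.finrank ℝ (Submodule.span ℝ (Set.range Aᵀ)) := hr
    omega
  classical
  obtain ⟨f⟩ := (Function.Embedding.truncOfCardLE
    (by simpa using hcard : Fintype.card (Fin (r + 1)) ≤ Fintype.card t)).exists_rep
  have hfli : LinearIndependent ℝ (fun j : Fin (r + 1) => ((f j : t) : m → ℝ)) :=
    htli.comp f f.injective
  have hsel : ∀ j : Fin (r + 1), ∃ c : p, Aᵀ c = ((f j : t) : m → ℝ) := by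
    intro j
    rcases hts (f j).2 with ⟨c, hc⟩
    exact ⟨c, hc⟩
  choose g hg using hsel
  have hAli : LinearIndependent ℝ (fun j : Fin (r + 1) => Aᵀ (g j)) := by
    simpa only [hg] using hfli
  -- the family of selected columns is open-condition linearly independent
  have hΦcont : Tendsto (fun s => fun j : Fin (r + 1) => (Aseq s)ᵀ (g j)) atTop
      (𝓝 (fun j : Fin (r + 1) => Aᵀ (g j))) := by
    rw [tendsto_pi_nhds]
    intro j
    rw [tendsto_pi_nhds]
    intro x
    have h1 : Tendsto (fun s => Aseq s x) atTop (𝓝 (A x)) :=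
      (tendsto_pi_nhds.1 hconv) x
    exact (tendsto_pi_nhds.1 h1) (g j)
  have hopen : IsOpen {w : Fin (r + 1) → (m → ℝ) | LinearIndependent ℝ w} :=
    isOpen_setOf_linearIndependent
  have hev : ∀ᶠ s in atTop,
      (fun j : Fin (r + 1) => (Aseq s)ᵀ (g j)) ∈
        {w : Fin (r + 1) → (m → ℝ) | LinearIndependent ℝ w} :=
    hΦcont.eventually (hopen.mem_nhds hAli)
  rcases hev.exists with ⟨s, hs⟩
  have := rank_ge_of_cols_li (Aseq s) g hs
  have := h s
  omega

/-- The set of tensors with TT ranks (ranks of all matricizations) at most `(r₁,…,r_{d-1})`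
is closed: if tensors `U⁽ⁿ⁾` with `rank A^i(U⁽ⁿ⁾) ≤ r_i` for all `i` converge to `U`, then
`rank A^i(U) ≤ r_i` for all `i`. -/
theorem tt_rank_bounded_set_closed {d : ℕ} {n : Fin d → ℕ}
    (Useq : ℕ → (((j : Fin d) → Fin (n j)) → ℝ)) (U : ((j : Fin d) → Fin (n j)) → ℝ)
    (r : ℕ → ℕ)
    (hrank : ∀ m : ℕ, ∀ i, 1 ≤ i → i < d → (matricize (Useq m) i).rank ≤ r i)
    (hconv : Tendsto Useq atTop (𝓝 U)) :
    ∀ i, 1 ≤ i → i < d → (matricize U i).rank ≤ r i := by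
  intro i h1 h2
  apply rank_le_of_tendsto (fun m => matricize (Useq m) i) (matricize U i) (r i)
    (fun m => hrank m i h1 h2)
  refine tendsto_pi_nhds.2 ?_
  intro y
  rw [tendsto_pi_nhds]
  intro z
  exact (tendsto_pi_nhds.1 hconv) _
end

section
/- For a normalized tensor (‖U‖ = 1), truncating the singular values of the matricization A^i at rank r gives squared error Σ_{k>r} σ_{i,k}², which is bounded by ( Σ_k σ_{i,k}^{2ω} )^{1/ω} · r^{1−1/ω} for any 0 < ω < 1 when the singular values are nonincreasing. -/
set_option maxHeartbeats 1600000


/-- Stechkin-type tail bound for SVD truncation of the matricization `A^i` of a normalized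
tensor: if the singular values `σ_k` are nonincreasing, nonnegative, and normalized
(`Σ_k σ_k² = 1`, i.e. `‖U‖ = 1`), then for `0 < ω < 1` the squared error of truncation at
rank `r ≥ 1`, namely `Σ_{k > r} σ_k²`, is bounded by `(Σ_k σ_k^{2ω})^{1/ω} · r^{1−1/ω}`. -/
theorem svd_tail_renyi_bound (σ : ℕ → ℝ) (ω : ℝ) (r : ℕ)
    (hmono : Antitone σ) (hpos : ∀ k, 0 ≤ σ k)
    (hω0 : 0 < ω) (hω1 : ω < 1) (hr : 1 ≤ r)
    (hnorm : ∑' k : ℕ, σ k ^ 2 = 1)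
    (hsum : Summable fun k : ℕ => σ k ^ (2 * ω)) :
    ∑' k : ℕ, σ (k + r) ^ 2 ≤
      (∑' k : ℕ, σ k ^ (2 * ω)) ^ (1 / ω) * (r : ℝ) ^ (1 - 1 / ω) := by
  set S : ℝ := ∑' k : ℕ, σ k ^ (2 * ω) with hS
  have hrR : (0:ℝ) < (r:ℝ) := by exact_mod_cast Nat.lt_of_lt_of_le Nat.zero_lt_one hr
  have hSnn : 0 ≤ S := tsum_nonneg fun k => Real.rpow_nonneg (hpos k) _
  have hsum2 : Summable (fun k : ℕ => σ k ^ 2) := by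
    by_contra h
    rw [tsum_eq_zero_of_not_summable h] at hnorm
    norm_num at hnorm
  -- key : r * σ r ^ (2ω) ≤ S
  have hkey : (r : ℝ) * σ r ^ (2 * ω) ≤ S := by
    have h1 : ∀ j ∈ Finset.range r, σ r ^ (2 * ω) ≤ σ j ^ (2 * ω) := by
      intro j hj
      exact Real.rpow_le_rpow (hpos r) (hmono (le_of_lt (Finset.mem_range.mp hj))) (by positivity)
    calc (r : ℝ) * σ r ^ (2 * ω) = ∑ j ∈ Finset.range r, σ r ^ (2 * ω) := by
          simp [Finset.sum_const, mul_comm]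
      _ ≤ ∑ j ∈ Finset.range r, σ j ^ (2 * ω) := Finset.sum_le_sum h1
      _ ≤ S := Summable.sum_le_tsum _ (fun k _ => Real.rpow_nonneg (hpos k) _) hsum
  have hσr : σ r ^ (2 * ω) ≤ S / r := by
    rw [le_div_iff₀ hrR]; linarith [hkey]
  -- tail bound
  have htailsum : Summable (fun k : ℕ => σ (k + r) ^ 2) :=
    ((summable_nat_add_iff r).mpr hsum2)
  have htailsumω : Summable (fun k : ℕ => σ (k + r) ^ (2 * ω)) :=
    ((summable_nat_add_iff r).mpr hsum)
  have hstep : ∀ k : ℕ, σ (k + r) ^ 2 ≤ σ (k + r) ^ (2 * ω) * σ r ^ (2 - 2 * ω) := by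
    intro k
    have hx : 0 ≤ σ (k + r) := hpos _
    have h1 : σ (k + r) ^ 2 = σ (k + r) ^ (2 * ω) * σ (k + r) ^ (2 - 2 * ω) := by
      rw [← Real.rpow_natCast (σ (k + r)) 2,
        show ((2:ℕ):ℝ) = 2 * ω + (2 - 2 * ω) by push_cast; ring,
        Real.rpow_add' hx (by norm_num)]
    rw [h1]
    apply mul_le_mul_of_nonneg_left _ (Real.rpow_nonneg hx _)
    exact Real.rpow_le_rpow hx (hmono (Nat.le_add_left r k)) (by linarith)
  have htail : ∑' k : ℕ, σ (k + r) ^ 2 ≤ S * σ r ^ (2 - 2 * ω) := by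
    calc ∑' k : ℕ, σ (k + r) ^ 2
        ≤ ∑' k : ℕ, σ (k + r) ^ (2 * ω) * σ r ^ (2 - 2 * ω) :=
          Summable.tsum_le_tsum hstep htailsum (htailsumω.mul_right _)
      _ = (∑' k : ℕ, σ (k + r) ^ (2 * ω)) * σ r ^ (2 - 2 * ω) := tsum_mul_right
      _ ≤ S * σ r ^ (2 - 2 * ω) := by
          apply mul_le_mul_of_nonneg_right _ (Real.rpow_nonneg (hpos r) _)
          exact Summable.tsum_le_tsum_of_inj (· + r) (fun a b h => by simpa using h) 
            (fun k _ => Real.rpow_nonneg (hpos k) _) (fun k => le_refl _) htailsumω hsum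
  -- bound σ r ^ (2 - 2ω) by (S/r)^((1-ω)/ω)
  have he : (0:ℝ) ≤ (1 - ω) / ω := div_nonneg (by linarith) hω0.le
  have hσr2 : σ r ^ (2 - 2 * ω) ≤ (S / r) ^ ((1 - ω) / ω) := by
    have h := Real.rpow_le_rpow (Real.rpow_nonneg (hpos r) _) hσr he
    rwa [← Real.rpow_mul (hpos r),
      show 2 * ω * ((1 - ω) / ω) = 2 - 2 * ω by field_simp] at h
  have hfinal : S * (S / r) ^ ((1 - ω) / ω) = S ^ (1 / ω) * (r : ℝ) ^ (1 - 1 / ω) := by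
    have h1 : S ^ (1 / ω) = S * S ^ ((1 - ω) / ω) := by
      rw [show 1 / ω = 1 + (1 - ω) / ω by field_simp; ring,
        Real.rpow_add' hSnn (by rw [show (1:ℝ) + (1 - ω) / ω = 1 / ω by field_simp; ring]; exact one_div_ne_zero hω0.ne'),
        Real.rpow_one]
    have h2 : (r : ℝ) ^ (1 - 1 / ω) = ((r : ℝ) ^ ((1 - ω) / ω))⁻¹ := by
      rw [show 1 - 1 / ω = -((1 - ω) / ω) by field_simp; ring, Real.rpow_neg hrR.le]
    rw [Real.div_rpow hSnn hrR.le, h1, h2]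
    ring
  calc ∑' k : ℕ, σ (k + r) ^ 2 ≤ S * σ r ^ (2 - 2 * ω) := htail
    _ ≤ S * (S / r) ^ ((1 - ω) / ω) := mul_le_mul_of_nonneg_left hσr2 hSnn
    _ = S ^ (1 / ω) * (r : ℝ) ^ (1 - 1 / ω) := hfinal
end

section
/- The coupled cluster parametrization is bijective: the map t ↦ e^{T(t)} c₀ is a bijection from coefficient vectors (t_β)_{β∈I} onto the affine set { c₀ + c* : c* ⊥ c₀, c* ∈ span of excited determinants }, i.e. every vector c with ⟨c₀, c⟩ = 1 in the N-particle Full CI space has a unique representation c = e^{T(t)} c₀. -/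
open NormedSpace
open scoped InnerProductSpace

private lemma ccp_pow_sum_expand {A : Type*} [Ring A] [Algebra ℂ A] {ι : Type*} [Fintype ι]
    (X : ι → A) (t : ι → ℂ) : ∀ k : ℕ,
    (∑ β, t β • X β) ^ k
      = ∑ g : Fin k → ι, (∏ i, t (g i)) • ((List.ofFn g).map X).prod
  | 0 => by
      simp
  | (k + 1) => by
      rw [pow_succ', ccp_pow_sum_expand X t k, Finset.mul_sum,
        ← Equiv.sum_comp (Fin.consEquiv fun _ => ι)
          (fun g : Fin (k+1) → ι => (∏ i, t (g i)) • ((List.ofFn g).map X).prod),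
        Fintype.sum_prod_type]
      rw [show (∑ g : Fin k → ι, (∑ β, t β • X β) * ((∏ i, t (g i)) • ((List.ofFn g).map X).prod))
          = ∑ g : Fin k → ι, ∑ β, (t β • X β) * ((∏ i, t (g i)) • ((List.ofFn g).map X).prod)
        from Finset.sum_congr rfl fun g _ => Finset.sum_mul _ _ _, Finset.sum_comm]
      refine Finset.sum_congr rfl fun β _ => Finset.sum_congr rfl fun g _ => ?_
      rw [Fin.prod_univ_succ, List.ofFn_succ]
      simp only [Fin.consEquiv_apply, Fin.cons_zero, Fin.cons_succ, List.map_cons, List.prod_cons]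
      rw [smul_mul_smul_comm]

/-- Bijectivity of the coupled cluster parametrization: in the finite-dimensional Full CI
space `E` with normalized reference `c₀`, if the excitation operators `X_β` are mutually
commuting and nilpotent, map `c₀` onto an orthonormal basis of the orthogonal complement
of `c₀`, and every nonempty product of them maps `c₀` into that orthogonal complement,
then `t ↦ e^{T(t)} c₀` (with `T(t) = Σ_β t_β X_β`) is a bijection onto the affine set
`{c : ⟨c₀, c⟩ = 1}`: every such `c` has a unique representation `c = e^{T(t)} c₀`. -/
theorem coupled_cluster_parametrization_bijective
    {E : Type*} [NormedAddCommGroup E] [InnerProductSpace ℂ E] [FiniteDimensional ℂ E]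
    (c₀ : E) (hc₀ : ‖c₀‖ = 1)
    {ι : Type*} [Fintype ι] (X : ι → E →L[ℂ] E)
    (hcomm : ∀ α β, X α * X β = X β * X α)
    (hnil : ∀ β, IsNilpotent (X β))
    (hbasis : Orthonormal ℂ (fun β => X β c₀))
    (hspan : Submodule.span ℂ (Set.range fun β => X β c₀) = (ℂ ∙ c₀)ᗮ)
    (hprod : ∀ L : List ι, L ≠ [] → ((L.map X).prod) c₀ ∈ (ℂ ∙ c₀)ᗮ) :
    (∀ t : ι → ℂ, ⟪c₀, exp (∑ β, t β • X β) c₀⟫_ℂ = 1) ∧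
    (∀ c : E, ⟪c₀, c⟫_ℂ = 1 → ∃! t : ι → ℂ, exp (∑ β, t β • X β) c₀ = c) := by
  classical
  let +nondep _ : NormedAlgebra ℚ (E →L[ℂ] E) := .restrictScalars ℚ ℂ (E →L[ℂ] E)
  set T : (ι → ℂ) → (E →L[ℂ] E) := fun t => ∑ β, t β • X β with hT
  have hc₀ne : c₀ ≠ 0 := fun h => by simp [h] at hc₀
  have : Nontrivial E := ⟨c₀, 0, hc₀ne⟩
  have hXcomm : ∀ α β, Commute (X α) (X β) := hcomm
  have hTcomm : ∀ a b : ι → ℂ, Commute (T a) (T b) := fun a b =>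
    Commute.sum_left _ _ _ fun α _ => Commute.sum_right _ _ _ fun β _ =>
      ((hXcomm α β).smul_left _).smul_right _
  have hTadd : ∀ a b : ι → ℂ, T a + T b = T (a + b) := by
    intro a b
    simp only [hT, ← Finset.sum_add_distrib, ← add_smul]
    rfl
  have hTnil : ∀ t, IsNilpotent (T t) := fun t =>
    Commute.isNilpotent_sum (fun β _ => (hnil β).smul (t β))
      (fun α β _ _ => ((hXcomm α β).smul_left _).smul_right _)
  -- uniform nilpotency bound
  set d : ℕ := Module.finrank ℂ E with hd
  have hdpos : 0 < d := Module.finrank_pos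
  have hpowd : ∀ t : ι → ℂ, (T t) ^ d = 0 := by
    intro t
    have h1 : IsNilpotent (ContinuousLinearMap.toLinearMapRingHom (R₁ := ℂ) (M₁ := E) (T t)) :=
      (hTnil t).map _
    have h2 := (LinearMap.isNilpotent_iff_charpoly _).mp h1
    have h3 : (ContinuousLinearMap.toLinearMapRingHom (R₁ := ℂ) (M₁ := E) (T t)) ^ d = 0 := by
      have h4 := LinearMap.aeval_self_charpoly
        (ContinuousLinearMap.toLinearMapRingHom (R₁ := ℂ) (M₁ := E) (T t))
      rwa [h2, map_pow, Polynomial.aeval_X] at h4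
    ext x
    have h5 : ContinuousLinearMap.toLinearMapRingHom (R₁ := ℂ) (M₁ := E) ((T t) ^ d) = 0 := by
      rw [map_pow, h3]
    exact LinearMap.congr_fun h5 x
  have hpowk : ∀ (t : ι → ℂ) (k : ℕ), d ≤ k → (T t) ^ k = 0 :=
    fun t k hk => pow_eq_zero_of_le hk (hpowd t)
  set M : ℕ := d + 1 with hM
  have hexp : ∀ t, exp (T t) = ∑ k ∈ Finset.range M, (k.factorial : ℂ)⁻¹ • (T t) ^ k := by
    intro t
    rw [exp_eq_tsum ℂ]
    refine tsum_eq_sum ?_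
    intro k hk
    rw [hpowk t k ?_, smul_zero]
    · exact le_trans (Nat.le_succ d) (not_lt.mp fun h => hk (Finset.mem_range.mpr h))
  -- the subspace spanned by nonempty products applied to c₀
  set W : Submodule ℂ E :=
    Submodule.span ℂ {v | ∃ L : List ι, L ≠ [] ∧ ((L.map X).prod) c₀ = v} with hW
  have hWle : W ≤ (ℂ ∙ c₀)ᗮ := Submodule.span_le.mpr (by
    rintro v ⟨L, hL, rfl⟩; exact hprod L hL)
  have hXW : ∀ β, ∀ v ∈ W, X β v ∈ W := by
    intro β v hv
    induction hv using Submodule.span_induction with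
    | mem v hv =>
        obtain ⟨L, hL, rfl⟩ := hv
        refine Submodule.subset_span ⟨β :: L, by simp, ?_⟩
        simp [List.prod_cons]
    | zero => simp
    | add x y _ _ hx hy => rw [map_add]; exact W.add_mem hx hy
    | smul a x _ hx => rw [map_smul]; exact W.smul_mem a hx
  have hTW : ∀ t, ∀ v ∈ W, T t v ∈ W := by
    intro t v hv
    rw [hT]
    simp only [ContinuousLinearMap.coe_sum', Finset.sum_apply,
      ContinuousLinearMap.coe_smul', Pi.smul_apply]
    exact Submodule.sum_mem _ fun β _ => W.smul_mem _ (hXW β v hv)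
  have hTc₀W : ∀ t, T t c₀ ∈ W := by
    intro t
    rw [hT]
    simp only [ContinuousLinearMap.coe_sum', Finset.sum_apply,
      ContinuousLinearMap.coe_smul', Pi.smul_apply]
    refine Submodule.sum_mem _ fun β _ => W.smul_mem _ ?_
    exact Submodule.subset_span ⟨[β], by simp, by simp⟩
  have hpowW : ∀ (t : ι → ℂ) (k : ℕ), ((T t) ^ (k + 1)) c₀ ∈ W := by
    intro t k
    induction k with
    | zero => simpa using hTc₀W t
    | succ k ih =>
        rw [pow_succ', ContinuousLinearMap.mul_apply]
        exact hTW t _ ih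
  have hwW : ∀ t, exp (T t) c₀ - c₀ ∈ W := by
    intro t
    rw [hexp t]
    simp only [ContinuousLinearMap.coe_sum', Finset.sum_apply,
      ContinuousLinearMap.coe_smul', Pi.smul_apply]
    rw [hM, Finset.sum_range_succ']
    simp only [pow_zero, ContinuousLinearMap.one_apply, Nat.factorial_zero, Nat.cast_one,
      inv_one, one_smul, add_sub_cancel_right]
    exact Submodule.sum_mem _ fun k _ => W.smul_mem _ (hpowW t k)
  have hoc : ∀ v ∈ (ℂ ∙ c₀)ᗮ, ⟪c₀, v⟫_ℂ = 0 := fun v hv =>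
    Submodule.mem_orthogonal_singleton_iff_inner_right.mp hv
  have hc₀c₀ : ⟪c₀, c₀⟫_ℂ = 1 := by
    rw [inner_self_eq_norm_sq_to_K, hc₀]; norm_num
  have part1 : ∀ t : ι → ℂ, ⟪c₀, exp (T t) c₀⟫_ℂ = 1 := by
    intro t
    have h1 : exp (T t) c₀ = c₀ + (exp (T t) c₀ - c₀) := by abel
    rw [h1, inner_add_right, hc₀c₀, hoc _ (hWle (hwW t)), add_zero]
  -- coordinates determine vectors in the orthogonal complement
  have hcoord : ∀ v ∈ (ℂ ∙ c₀)ᗮ, (∀ β, ⟪X β c₀, v⟫_ℂ = 0) → v = 0 := by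
    intro v hv h0
    rw [← hspan] at hv
    have h1 : ∀ u ∈ Submodule.span ℂ (Set.range fun β => X β c₀), ⟪u, v⟫_ℂ = 0 := by
      intro u hu
      induction hu using Submodule.span_induction with
      | mem u hu => obtain ⟨β, rfl⟩ := hu; exact h0 β
      | zero => exact inner_zero_left v
      | add x y _ _ hx hy => rw [inner_add_left, hx, hy, add_zero]
      | smul a x _ hx => rw [inner_smul_left, hx, mul_zero]
    exact inner_self_eq_zero.mp (h1 v hv)
  -- the coefficient map
  set f : (ι → ℂ) → ι → ℂ := fun t β => ⟪X β c₀, exp (T t) c₀⟫_ℂ with hf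
  have hfexp0 : ∀ t β, f t β =
      ∑ k ∈ Finset.range M, (k.factorial : ℂ)⁻¹ * ⟪X β c₀, ((T t) ^ k) c₀⟫_ℂ := by
    intro t β
    rw [hf]
    simp only [hexp t, ContinuousLinearMap.coe_sum', Finset.sum_apply,
      ContinuousLinearMap.coe_smul', Pi.smul_apply, inner_sum, inner_smul_right]
  have hfexp : ∀ t β, f t β =
      ∑ k ∈ Finset.range M, (k.factorial : ℂ)⁻¹ *
        ∑ g : Fin k → ι, (∏ i, t (g i)) * ⟪X β c₀, (((List.ofFn g).map X).prod) c₀⟫_ℂ := by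
    intro t β
    rw [hfexp0 t β]
    refine Finset.sum_congr rfl fun k _ => ?_
    congr 1
    rw [show (T t) ^ k = ∑ g : Fin k → ι, (∏ i, t (g i)) • ((List.ofFn g).map X).prod
      from ccp_pow_sum_expand X t k]
    simp only [ContinuousLinearMap.coe_sum', Finset.sum_apply,
      ContinuousLinearMap.coe_smul', Pi.smul_apply, inner_sum, inner_smul_right]
  -- f as a polynomial map
  set p : ι → MvPolynomial ι ℂ := fun β => ∑ k ∈ Finset.range M, ∑ g : Fin k → ι,
      MvPolynomial.C ((k.factorial : ℂ)⁻¹ * ⟪X β c₀, (((List.ofFn g).map X).prod) c₀⟫_ℂ) *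
        ∏ i, MvPolynomial.X (g i) with hp
  have hpeval : ∀ t β, MvPolynomial.eval t (p β) = f t β := by
    intro t β
    rw [hp, hfexp t β]
    simp only [map_sum, MvPolynomial.eval_mul, MvPolynomial.eval_C, MvPolynomial.eval_prod,
      MvPolynomial.eval_X, Finset.mul_sum]
    exact Finset.sum_congr rfl fun k _ => Finset.sum_congr rfl fun g _ => by ring
  -- f t determines exp (T t) c₀
  have hexp_eq : ∀ t s, f t = f s → exp (T t) c₀ = exp (T s) c₀ := by
    intro t s hts
    have h1 : exp (T t) c₀ - exp (T s) c₀ ∈ (ℂ ∙ c₀)ᗮ := by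
      have h2 := hWle (W.sub_mem (hwW t) (hwW s))
      rwa [sub_sub_sub_cancel_right] at h2
    refine sub_eq_zero.mp (hcoord _ h1 fun β => ?_)
    rw [inner_sub_right]
    have h3 : f t β = f s β := congrFun hts β
    rw [hf] at h3
    simp only at h3
    rw [h3, sub_self]
  have hunit : ∀ (s : ι → ℂ) (x y : E), exp (T s) x = exp (T s) y → x = y := by
    intro s x y hxy
    have h1 : exp (T (-s)) * exp (T s) = 1 := by
      rw [← exp_add_of_commute (hTcomm (-s) s), hTadd, neg_add_cancel]
      have hT0 : T (0 : ι → ℂ) = 0 := by simp [hT]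
      rw [hT0, exp_zero]
    have h2 := congrArg (fun A : E →L[ℂ] E => A x) h1
    have h3 := congrArg (fun A : E →L[ℂ] E => A y) h1
    simp only [ContinuousLinearMap.mul_apply, ContinuousLinearMap.one_apply] at h2 h3
    rw [← h2, ← h3, hxy]
  have horth : ∀ β, ⟪X β c₀, c₀⟫_ℂ = 0 := by
    intro β
    have h1 := hoc _ (hprod [β] (by simp))
    simp only [List.map_cons, List.map_nil, List.prod_cons, List.prod_nil, mul_one] at h1
    rw [← inner_conj_symm, h1, map_zero]
  -- injectivity of f
  have hinj : Function.Injective f := by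
    intro t s hts
    have h3 : exp (T (t - s)) c₀ = c₀ := by
      refine hunit s _ _ ?_
      have h4 : exp (T s) * exp (T (t - s)) = exp (T t) := by
        rw [← exp_add_of_commute (hTcomm s (t - s)), hTadd, add_sub_cancel]
      have h5 := congrArg (fun A : E →L[ℂ] E => A c₀) h4
      simp only [ContinuousLinearMap.mul_apply] at h5
      rw [h5, hexp_eq t s hts]
    set u : ι → ℂ := t - s with hu
    have h6 : ∀ n : ℕ, ((exp (T u)) ^ n) c₀ = c₀ := by
      intro n
      induction n with
      | zero => simp
      | succ n ih =>
          rw [pow_succ', ContinuousLinearMap.mul_apply, ih, h3]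
    have h7 : ∀ n : ℕ, T ((n : ℂ) • u) = (n : ℂ) • T u := by
      intro n
      rw [hT]
      simp only [Pi.smul_apply, smul_eq_mul, Finset.smul_sum, smul_smul]
    have h8 : ∀ n : ℕ, exp (T ((n : ℂ) • u)) c₀ = c₀ := by
      intro n
      rw [h7 n, Nat.cast_smul_eq_nsmul ℂ n (T u), exp_nsmul]
      exact h6 n
    have h9 : ∀ β, u β = 0 := by
      intro β
      set a : ℕ → ℂ := fun k => (k.factorial : ℂ)⁻¹ * ⟪X β c₀, ((T u) ^ k) c₀⟫_ℂ with ha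
      set q : Polynomial ℂ := ∑ k ∈ Finset.range M, Polynomial.C (a k) * Polynomial.X ^ k with hq
      have hqeval : ∀ n : ℕ, q.eval ((n : ℕ) : ℂ) = 0 := by
        intro n
        have h10 : f ((n : ℂ) • u) β = 0 := by
          rw [hf]; simp only
          rw [h8 n, horth β]
        rw [hfexp0 _ β] at h10
        rw [hq]
        simp only [Polynomial.eval_finset_sum, Polynomial.eval_mul, Polynomial.eval_C,
          Polynomial.eval_pow, Polynomial.eval_X]
        rw [← h10]
        refine Finset.sum_congr rfl fun k _ => ?_
        rw [ha, h7 n, smul_pow]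
        simp only [ContinuousLinearMap.coe_smul', Pi.smul_apply, inner_smul_right]
        ring
      have hq0 : q = 0 := by
        refine Polynomial.eq_zero_of_infinite_isRoot q ?_
        refine Set.Infinite.mono ?_ (Set.infinite_range_of_injective
          (fun (n m : ℕ) (h : (n : ℂ) = m) => Nat.cast_injective h))
        rintro x ⟨n, rfl⟩
        exact hqeval n
      have h11 : q.coeff 1 = a 1 := by
        rw [hq, Polynomial.finset_sum_coeff]
        rw [Finset.sum_eq_single 1]
        · simp
        · intro k _ hk
          rw [Polynomial.coeff_C_mul, Polynomial.coeff_X_pow, if_neg (Ne.symm hk), mul_zero]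
        · intro h
          exact absurd (Finset.mem_range.mpr (by omega)) h
      have h12 : a 1 = u β := by
        rw [ha]
        simp only [Nat.factorial_one, Nat.cast_one, inv_one, one_mul, pow_one]
        rw [hT]
        simp only [ContinuousLinearMap.coe_sum', Finset.sum_apply,
          ContinuousLinearMap.coe_smul', Pi.smul_apply]
        exact hbasis.inner_right_fintype u β
      rw [← h12, ← h11, hq0, Polynomial.coeff_zero]
    have : u = 0 := funext h9
    rw [hu] at this
    exact sub_eq_zero.mp this
  -- surjectivity via Ax–Grothendieck
  refine ⟨part1, ?_⟩
  intro c hc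
  have hinjP : Function.Injective (fun (v : ι → ℂ) (β : ι) => MvPolynomial.eval v (p β)) := by
    intro t s h
    refine hinj ?_
    funext β
    rw [← hpeval t β, ← hpeval s β]
    exact congrFun h β
  obtain ⟨t, ht⟩ := ax_grothendieck_univ p hinjP (fun β => ⟪X β c₀, c⟫_ℂ)
  have hft : ∀ β, f t β = ⟪X β c₀, c⟫_ℂ := by
    intro β
    rw [← hpeval t β]
    exact congrFun ht β
  have hcmem : c - c₀ ∈ (ℂ ∙ c₀)ᗮ := by
    refine Submodule.mem_orthogonal_singleton_iff_inner_right.mpr ?_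
    rw [inner_sub_right, hc, hc₀c₀, sub_self]
  refine ⟨t, ?_, ?_⟩
  · have h1 : exp (T t) c₀ - c ∈ (ℂ ∙ c₀)ᗮ := by
      have h2 := Submodule.sub_mem _ (hWle (hwW t)) hcmem
      rwa [sub_sub_sub_cancel_right] at h2
    refine sub_eq_zero.mp (hcoord _ h1 fun β => ?_)
    rw [inner_sub_right]
    have h3 := hft β
    rw [hf] at h3
    simp only at h3
    rw [h3, sub_self]
  · intro s hs
    refine hinj ?_
    funext β
    show ⟪X β c₀, exp (T s) c₀⟫_ℂ = f t β
    rw [show exp (T s) c₀ = c from hs, hft β]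
end
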